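/- Let ψ and φ be permutation-symmetric states of n ≥ 3 qudits and suppose there exist unitary d×d matrices U_1,…,U_n with (U_1 ⊗ ⋯ ⊗ U_n) ψ = φ. Then there exists a single unitary d×d matrix U with U^{⊗n} ψ = φ. -/

import Mathlib

open Matrix BigOperators Polynomial

/-- Permutation symmetry of an `n`-qudit state represented by its amplitudes. -/
def PSym {n d : ℕ} (ψ : (Fin n → Fin d) → ℂ) : Prop :=
  ∀ σ : Equiv.Perm (Fin n), ∀ x : Fin n → Fin d, ψ (x ∘ σ) = ψ x

/-- The operator `B` acting on the `k`-th tensor factor (identity elsewhere). -/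
noncomputable def appAt {n d : ℕ} (k : Fin n) (B : Matrix (Fin d) (Fin d) ℂ)
    (ψ : (Fin n → Fin d) → ℂ) : (Fin n → Fin d) → ℂ :=
  fun x => ∑ j : Fin d, B (x k) j * ψ (Function.update x k j)

/-- The operator `A 1 ⊗ A 2 ⊗ ⋯ ⊗ A n` acting on an `n`-qudit state. -/
noncomputable def appAll {n d : ℕ} (A : Fin n → Matrix (Fin d) (Fin d) ℂ)
    (ψ : (Fin n → Fin d) → ℂ) : (Fin n → Fin d) → ℂ :=
  fun x => ∑ y : Fin n → Fin d, (∏ k, A k (x k) (y k)) * ψ y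


namespace StmtAux

variable {n d : ℕ}

lemma appAll_appAll (A B : Fin n → Matrix (Fin d) (Fin d) ℂ) (ψ : (Fin n → Fin d) → ℂ) :
    appAll A (appAll B ψ) = appAll (fun k => A k * B k) ψ := by
  funext x
  simp only [appAll, Finset.mul_sum]
  rw [Finset.sum_comm]
  refine Finset.sum_congr rfl fun z _ => ?_
  have h1 : ∀ y : Fin n → Fin d,
      (∏ k, A k (x k) (y k)) * ((∏ k, B k (y k) (z k)) * ψ z)
      = (∏ k, A k (x k) (y k) * B k (y k) (z k)) * ψ z := by
    intro y; rw [Finset.prod_mul_distrib]; ring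
  rw [Finset.sum_congr rfl fun y _ => h1 y, ← Finset.sum_mul]
  congr 1
  have h2 := Finset.prod_univ_sum (fun _ : Fin n => (Finset.univ : Finset (Fin d)))
    (fun k j => A k (x k) j * B k j (z k))
  rw [Fintype.piFinset_univ] at h2
  rw [← h2]
  exact Finset.prod_congr rfl fun k _ => Matrix.mul_apply.symm

lemma appAll_one (ψ : (Fin n → Fin d) → ℂ) :
    appAll (fun _ => (1 : Matrix (Fin d) (Fin d) ℂ)) ψ = ψ := by
  funext x
  simp only [appAll]
  have h1 : ∀ y : Fin n → Fin d, (∏ k, (1 : Matrix (Fin d) (Fin d) ℂ) (x k) (y k))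
      = if y = x then 1 else 0 := by
    intro y
    simp only [Matrix.one_apply, Finset.prod_boole]
    congr 1
    simp only [funext_iff, eq_iff_iff]
    constructor
    · intro hh k; exact (hh k (Finset.mem_univ k)).symm
    · intro hh k _; exact (hh k).symm
  rw [Finset.sum_congr rfl fun y _ => by rw [h1 y]]
  simp

/-- Covariance under permutations. -/
lemma appAll_perm {ψ : (Fin n → Fin d) → ℂ} (hψ : PSym ψ)
    (A : Fin n → Matrix (Fin d) (Fin d) ℂ) (σ : Equiv.Perm (Fin n)) (x : Fin n → Fin d) :
    appAll (fun k => A (σ k)) ψ x = appAll A ψ (x ∘ (⇑σ⁻¹ : Fin n → Fin n)) := by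
  simp only [appAll]
  symm
  rw [← Equiv.sum_comp (Equiv.arrowCongr σ (Equiv.refl (Fin d)))]
  refine Finset.sum_congr rfl fun y _ => ?_
  have he : ∀ k, (Equiv.arrowCongr σ (Equiv.refl (Fin d))) y k = y (σ⁻¹ k) := by
    intro k; simp [Equiv.arrowCongr, Equiv.Perm.inv_def]
  have hψy : ψ ((Equiv.arrowCongr σ (Equiv.refl (Fin d))) y) = ψ y := by
    have h3 : ((Equiv.arrowCongr σ (Equiv.refl (Fin d))) y) = y ∘ (⇑σ⁻¹ : Fin n → Fin n) := by
      funext k; exact he k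
    rw [h3, hψ σ⁻¹ y]
  rw [hψy]
  congr 1
  have h4 := Equiv.prod_comp σ (fun k => A k ((x ∘ (⇑σ⁻¹ : Fin n → Fin n)) k) (y (σ⁻¹ k)))
  calc ∏ k, A k ((x ∘ (⇑σ⁻¹ : Fin n → Fin n)) k) ((Equiv.arrowCongr σ (Equiv.refl (Fin d))) y k)
      = ∏ k, A k ((x ∘ (⇑σ⁻¹ : Fin n → Fin n)) k) (y (σ⁻¹ k)) :=
        Finset.prod_congr rfl fun k _ => by rw [he k]
    _ = ∏ k, A (σ k) ((x ∘ (⇑σ⁻¹ : Fin n → Fin n)) (σ k)) (y (σ⁻¹ (σ k))) := h4.symm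
    _ = ∏ k, A (σ k) (x k) (y k) := Finset.prod_congr rfl fun k _ => by simp

/-- transport of vector identities along permutations -/
lemma appAll_transport {ψ : (Fin n → Fin d) → ℂ} (hψ : PSym ψ)
    {A B : Fin n → Matrix (Fin d) (Fin d) ℂ} (h : appAll A ψ = appAll B ψ)
    (σ : Equiv.Perm (Fin n)) :
    appAll (fun k => A (σ k)) ψ = appAll (fun k => B (σ k)) ψ := by
  funext x
  rw [appAll_perm hψ A σ x, appAll_perm hψ B σ x, h]

/-- the tuple which is `X` in slot `i` and `1` elsewhere. -/
noncomputable def uOne (i : Fin n) (X : Matrix (Fin d) (Fin d) ℂ) : Fin n → Matrix (Fin d) (Fin d) ℂ :=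
  Function.update (fun _ => (1 : Matrix (Fin d) (Fin d) ℂ)) i X

lemma uOne_apply (i : Fin n) (X : Matrix (Fin d) (Fin d) ℂ) (k : Fin n) :
    uOne i X k = if k = i then X else 1 := by
  simp [uOne, Function.update_apply]

lemma uOne_one (i : Fin n) : uOne i (1 : Matrix (Fin d) (Fin d) ℂ) = fun _ => 1 := by
  funext k; rw [uOne_apply]; split <;> rfl

lemma appAll_uOne_one (i : Fin n) (ψ : (Fin n → Fin d) → ℂ) :
    appAll (uOne i (1 : Matrix (Fin d) (Fin d) ℂ)) ψ = ψ := by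
  rw [uOne_one, appAll_one]

lemma uOne_mul_self (i : Fin n) (X Y : Matrix (Fin d) (Fin d) ℂ) :
    (fun k => uOne i X k * uOne i Y k) = uOne i (X * Y) := by
  funext k; simp only [uOne_apply]; split <;> simp

lemma uOne_comm (i j : Fin n) (hij : i ≠ j) (X Y : Matrix (Fin d) (Fin d) ℂ) :
    (fun k => uOne i X k * uOne j Y k) = (fun k => uOne j Y k * uOne i X k) := by
  funext k; simp only [uOne_apply]
  by_cases h1 : k = i <;> by_cases h2 : k = j <;> simp_all

lemma uOne_comp_perm (σ : Equiv.Perm (Fin n)) (a : Fin n) (X : Matrix (Fin d) (Fin d) ℂ) :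
    (fun k => uOne a X (σ k)) = uOne (σ⁻¹ a) X := by
  funext k; simp only [uOne_apply]
  have : σ k = a ↔ k = σ⁻¹ a := by
    constructor
    · intro hh; rw [← hh]; simp
    · intro hh; rw [hh]; simp
  rw [if_congr this rfl rfl]

/-- slot-independence of a matrix on a state -/
def SInd (ψ : (Fin n → Fin d) → ℂ) (X : Matrix (Fin d) (Fin d) ℂ) : Prop :=
  ∀ i j : Fin n, appAll (uOne i X) ψ = appAll (uOne j X) ψ

lemma sind_one (ψ : (Fin n → Fin d) → ℂ) : SInd ψ (1 : Matrix (Fin d) (Fin d) ℂ) := by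
  intro i j; rw [appAll_uOne_one, appAll_uOne_one]

/-- key: products of slot-independent matrices are slot-independent (needs `3 ≤ n`). -/
lemma sind_mul (hn : 3 ≤ n) {ψ : (Fin n → Fin d) → ℂ} {X Y : Matrix (Fin d) (Fin d) ℂ}
    (hX : SInd ψ X) (hY : SInd ψ Y) : SInd ψ (X * Y) := by
  intro i j
  by_cases hij : i = j
  · rw [hij]
  -- pick a third slot
  obtain ⟨c, hci, hcj⟩ : ∃ c : Fin n, c ≠ i ∧ c ≠ j := by
    have hle : ({i, j} : Finset (Fin n)).card ≤ 2 := Finset.card_insert_le _ _ |>.trans (by simp)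
    have hne : (({i, j} : Finset (Fin n))ᶜ).Nonempty := by
      rw [← Finset.card_pos, Finset.card_compl]
      have : Fintype.card (Fin n) = n := Fintype.card_fin n
      omega
    obtain ⟨c, hc⟩ := hne
    rw [Finset.mem_compl] at hc
    refine ⟨c, ?_, ?_⟩ <;> intro hh <;> apply hc <;> simp [hh]
  calc appAll (uOne i (X * Y)) ψ
      = appAll (fun k => uOne i X k * uOne i Y k) ψ := by rw [uOne_mul_self]
    _ = appAll (uOne i X) (appAll (uOne i Y) ψ) := (appAll_appAll _ _ _).symm
    _ = appAll (uOne i X) (appAll (uOne c Y) ψ) := by rw [hY i c]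
    _ = appAll (fun k => uOne i X k * uOne c Y k) ψ := appAll_appAll _ _ _
    _ = appAll (fun k => uOne c Y k * uOne i X k) ψ := by rw [uOne_comm i c (Ne.symm hci)]
    _ = appAll (uOne c Y) (appAll (uOne i X) ψ) := (appAll_appAll _ _ _).symm
    _ = appAll (uOne c Y) (appAll (uOne j X) ψ) := by rw [hX i j]
    _ = appAll (fun k => uOne c Y k * uOne j X k) ψ := appAll_appAll _ _ _
    _ = appAll (fun k => uOne j X k * uOne c Y k) ψ := by rw [← uOne_comm j c (Ne.symm hcj)]
    _ = appAll (uOne j X) (appAll (uOne c Y) ψ) := (appAll_appAll _ _ _).symm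
    _ = appAll (uOne j X) (appAll (uOne j Y) ψ) := by rw [hY c j]
    _ = appAll (uOne j (X * Y)) ψ := by rw [appAll_appAll, uOne_mul_self]

lemma sind_pow (hn : 3 ≤ n) {ψ : (Fin n → Fin d) → ℂ} {X : Matrix (Fin d) (Fin d) ℂ}
    (hX : SInd ψ X) : ∀ m : ℕ, SInd ψ (X ^ m) := by
  intro m
  induction m with
  | zero => simpa using sind_one ψ
  | succ m ih => rw [pow_succ]; exact sind_mul hn ih hX

/-- slot-linearity of appAll in one slot -/
lemma appAll_update_add (A : Fin n → Matrix (Fin d) (Fin d) ℂ) (i : Fin n)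
    (X Y : Matrix (Fin d) (Fin d) ℂ) (ψ : (Fin n → Fin d) → ℂ) :
    appAll (Function.update A i (X + Y)) ψ
      = fun x => appAll (Function.update A i X) ψ x + appAll (Function.update A i Y) ψ x := by
  funext x
  simp only [appAll]
  rw [← Finset.sum_add_distrib]
  refine Finset.sum_congr rfl fun y _ => ?_
  have key : ∀ Z : Matrix (Fin d) (Fin d) ℂ,
      (∏ k, Function.update A i Z k (x k) (y k))
        = Z (x i) (y i) * ∏ k ∈ Finset.univ.erase i, A k (x k) (y k) := by
    intro Z
    rw [← Finset.mul_prod_erase Finset.univ _ (Finset.mem_univ i)]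
    congr 1
    · simp
    · exact Finset.prod_congr rfl fun k hk => by
        rw [Function.update_apply, if_neg (Finset.mem_erase.mp hk).1]
  rw [key, key, key, Matrix.add_apply]
  ring

lemma appAll_update_smul (A : Fin n → Matrix (Fin d) (Fin d) ℂ) (i : Fin n)
    (c : ℂ) (X : Matrix (Fin d) (Fin d) ℂ) (ψ : (Fin n → Fin d) → ℂ) :
    appAll (Function.update A i (c • X)) ψ = fun x => c * appAll (Function.update A i X) ψ x := by
  funext x
  simp only [appAll, Finset.mul_sum]
  refine Finset.sum_congr rfl fun y _ => ?_
  have key : ∀ Z : Matrix (Fin d) (Fin d) ℂ,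
      (∏ k, Function.update A i Z k (x k) (y k))
        = Z (x i) (y i) * ∏ k ∈ Finset.univ.erase i, A k (x k) (y k) := by
    intro Z
    rw [← Finset.mul_prod_erase Finset.univ _ (Finset.mem_univ i)]
    congr 1
    · simp
    · exact Finset.prod_congr rfl fun k hk => by
        rw [Function.update_apply, if_neg (Finset.mem_erase.mp hk).1]
  rw [key, key, Matrix.smul_apply, smul_eq_mul]
  ring

lemma sind_add {ψ : (Fin n → Fin d) → ℂ} {X Y : Matrix (Fin d) (Fin d) ℂ}
    (hX : SInd ψ X) (hY : SInd ψ Y) : SInd ψ (X + Y) := by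
  intro i j
  have hu : ∀ (a : Fin n) (Z : Matrix (Fin d) (Fin d) ℂ),
      uOne a Z = Function.update (fun _ => (1:Matrix (Fin d) (Fin d) ℂ)) a Z := fun _ _ => rfl
  rw [hu, hu, appAll_update_add, appAll_update_add]
  funext x
  rw [← hu, ← hu, ← hu, ← hu, hX i j, hY i j]

lemma sind_smul {ψ : (Fin n → Fin d) → ℂ} {X : Matrix (Fin d) (Fin d) ℂ} (c : ℂ)
    (hX : SInd ψ X) : SInd ψ (c • X) := by
  intro i j
  have hu : ∀ (a : Fin n) (Z : Matrix (Fin d) (Fin d) ℂ),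
      uOne a Z = Function.update (fun _ => (1:Matrix (Fin d) (Fin d) ℂ)) a Z := fun _ _ => rfl
  rw [hu, hu, appAll_update_smul, appAll_update_smul]
  funext x
  rw [← hu, ← hu, hX i j]

lemma sind_zero (ψ : (Fin n → Fin d) → ℂ) : SInd ψ (0 : Matrix (Fin d) (Fin d) ℂ) := by
  have h0 : ∀ i : Fin n, appAll (uOne i (0 : Matrix (Fin d) (Fin d) ℂ)) ψ = fun _ => 0 := by
    intro i; funext x
    simp only [appAll, uOne]
    have : ∀ y : Fin n → Fin d, (∏ k, Function.update
        (fun _ => (1:Matrix (Fin d) (Fin d) ℂ)) i (0:Matrix (Fin d) (Fin d) ℂ) k (x k) (y k)) = 0 := by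
      intro y
      apply Finset.prod_eq_zero (Finset.mem_univ i)
      simp
    simp [this]
  intro i j; rw [h0 i, h0 j]

lemma sind_sum {ψ : (Fin n → Fin d) → ℂ} {s : Finset ℕ} {f : ℕ → Matrix (Fin d) (Fin d) ℂ}
    (hf : ∀ a ∈ s, SInd ψ (f a)) : SInd ψ (∑ a ∈ s, f a) := by
  classical
  induction s using Finset.induction with
  | empty => simpa using sind_zero ψ
  | insert _ _ hnotmem ih =>
    rw [Finset.sum_insert hnotmem]
    exact sind_add (hf _ (Finset.mem_insert_self _ _))
      (ih fun a ha => hf a (Finset.mem_insert_of_mem ha))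

lemma sind_aeval (hn : 3 ≤ n) {ψ : (Fin n → Fin d) → ℂ} {M : Matrix (Fin d) (Fin d) ℂ}
    (hM : SInd ψ M) (p : Polynomial ℂ) : SInd ψ (Polynomial.aeval M p) := by
  rw [Polynomial.aeval_eq_sum_range]
  exact sind_sum fun a _ => sind_smul _ (sind_pow hn hM a)

section Roll

variable (T : Fin n → Matrix (Fin d) (Fin d) ℂ)

noncomputable def Tnat (j : ℕ) : Matrix (Fin d) (Fin d) ℂ :=
  if h : j < n then T ⟨j, h⟩ else 1

noncomputable def Fprod : ℕ → Matrix (Fin d) (Fin d) ℂ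
  | 0 => 1
  | (m+1) => Tnat T (n - (m+1)) * Fprod m

noncomputable def hTup (m : ℕ) : Fin n → Matrix (Fin d) (Fin d) ℂ :=
  fun k => if (k:ℕ) < n - m then T k else if (k:ℕ) = n - m then Fprod T m else 1

lemma hTup_apply (m : ℕ) (k : Fin n) :
    hTup T m k = if (k:ℕ) < n - m then T k else if (k:ℕ) = n - m then Fprod T m else 1 := rfl

lemma sind_Fprod (hn : 3 ≤ n) {ψ : (Fin n → Fin d) → ℂ} (hT : ∀ k, SInd ψ (T k)) :
    ∀ m : ℕ, SInd ψ (Fprod T m) := by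
  intro m
  induction m with
  | zero => exact sind_one ψ
  | succ m ih =>
    show SInd ψ (Tnat T (n - (m+1)) * Fprod T m)
    refine sind_mul hn ?_ ih
    unfold Tnat
    split
    · exact hT _
    · exact sind_one ψ

lemma roll_step {ψ : (Fin n → Fin d) → ℂ} (hn : 3 ≤ n) (hT : ∀ k, SInd ψ (T k))
    (m : ℕ) (hm1 : 1 ≤ m) (hm2 : m + 1 ≤ n) :
    appAll (hTup T m) ψ = appAll (hTup T (m+1)) ψ := by
  have hr : n - m - 1 < n := by omega
  have hs : n - m < n := by omega
  set rF : Fin n := ⟨n - m - 1, hr⟩ with hrF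
  set sF : Fin n := ⟨n - m, hs⟩ with hsF
  set R : Fin n → Matrix (Fin d) (Fin d) ℂ :=
    fun k => if (k:ℕ) < n - m - 1 then T k else 1 with hR
  have hsplit : hTup T m
      = fun k => R k * (uOne rF (T rF) k * uOne sF (Fprod T m) k) := by
    funext k
    simp only [hTup, hR, uOne_apply]
    by_cases h1 : (k:ℕ) < n - m - 1
    · rw [if_pos (by omega : (k:ℕ) < n - m), if_pos h1,
        if_neg (by intro hh; rw [hh] at h1; simp [hrF, hsF] at h1 <;> omega),
        if_neg (by intro hh; rw [hh] at h1; simp [hrF, hsF] at h1 <;> omega)]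
      simp
    · by_cases h2 : (k:ℕ) = n - m - 1
      · have hk : k = rF := by apply Fin.ext; simpa using h2
        rw [if_pos (by omega : (k:ℕ) < n - m), if_neg h1, if_pos hk,
          if_neg (by rw [hk]; intro hh; rw [Fin.ext_iff] at hh; simp [hrF, hsF] at hh <;> omega)]
        simp [hk]
      · by_cases h3 : (k:ℕ) = n - m
        · have hk : k = sF := by apply Fin.ext; simpa using h3
          rw [if_neg (by omega), if_pos h3, if_neg h1,
            if_neg (by rw [hk]; intro hh; rw [Fin.ext_iff] at hh; simp [hrF, hsF] at hh <;> omega),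
            if_pos hk]
          simp
        · rw [if_neg (by omega), if_neg h3, if_neg h1,
            if_neg (by intro hh; exact h2 (by rw [hh])),
            if_neg (by intro hh; exact h3 (by rw [hh]))]
          simp
  have hFsucc : T rF * Fprod T m = Fprod T (m+1) := by
    show _ = Tnat T (n - (m+1)) * Fprod T m
    congr 1
    unfold Tnat
    rw [dif_pos (by omega : n - (m+1) < n)]
    congr 1
  have hmerge : hTup T (m+1) = fun k => R k * uOne rF (Fprod T (m+1)) k := by
    funext k
    simp only [hTup, hR, uOne_apply]
    by_cases h1 : (k:ℕ) < n - m - 1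
    · rw [if_pos (by omega : (k:ℕ) < n - (m+1)), if_pos h1,
        if_neg (by intro hh; rw [hh] at h1; simp [hrF, hsF] at h1 <;> omega)]
      simp
    · by_cases h2 : (k:ℕ) = n - m - 1
      · have hk : k = rF := by apply Fin.ext; simpa using h2
        rw [if_neg (by omega), if_pos (by omega : (k:ℕ) = n - (m+1)), if_neg h1, if_pos hk]
        simp
      · rw [if_neg (by omega), if_neg (by omega : ¬ (k:ℕ) = n - (m+1)), if_neg h1,
          if_neg (by intro hh; exact h2 (by rw [hh]))]
        simp
  rw [hsplit, hmerge]
  calc appAll (fun k => R k * (uOne rF (T rF) k * uOne sF (Fprod T m) k)) ψ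
      = appAll R (appAll (fun k => uOne rF (T rF) k * uOne sF (Fprod T m) k) ψ) :=
        (appAll_appAll R _ ψ).symm
    _ = appAll R (appAll (uOne rF (T rF)) (appAll (uOne sF (Fprod T m)) ψ)) := by
        rw [appAll_appAll (uOne rF (T rF)) (uOne sF (Fprod T m)) ψ]
    _ = appAll R (appAll (uOne rF (T rF)) (appAll (uOne rF (Fprod T m)) ψ)) := by
        rw [sind_Fprod T hn hT m sF rF]
    _ = appAll R (appAll (fun k => uOne rF (T rF) k * uOne rF (Fprod T m) k) ψ) := by
        rw [appAll_appAll (uOne rF (T rF)) (uOne rF (Fprod T m)) ψ]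
    _ = appAll R (appAll (uOne rF (Fprod T (m+1))) ψ) := by
        rw [uOne_mul_self, hFsucc]
    _ = appAll (fun k => R k * uOne rF (Fprod T (m+1)) k) ψ := appAll_appAll R _ ψ

lemma roll (hn : 3 ≤ n) {ψ : (Fin n → Fin d) → ℂ} (hT : ∀ k, SInd ψ (T k)) :
    ∀ m : ℕ, m ≤ n → appAll (hTup T m) ψ = appAll T ψ := by
  intro m
  induction m with
  | zero =>
    intro _
    have he : hTup T 0 = T := by
      funext k
      rw [hTup_apply, if_pos (by omega : (k:ℕ) < n - 0)]
    rw [he]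
  | succ m ih =>
    intro hm
    by_cases hm0 : m = 0
    · subst hm0
      have h01 : hTup T 1 = hTup T 0 := by
        funext k
        rw [hTup_apply, hTup_apply]
        by_cases h1 : (k:ℕ) < n - 1
        · rw [if_pos h1, if_pos (by omega : (k:ℕ) < n - 0)]
        · have h2 : (k:ℕ) = n - 1 := by omega
          rw [if_neg h1, if_pos h2, if_pos (by omega : (k:ℕ) < n - 0)]
          show Tnat T (n - 1) * Fprod T 0 = T k
          show Tnat T (n - 1) * 1 = T k
          rw [mul_one]
          unfold Tnat
          rw [dif_pos (by omega : n - 1 < n)]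
          have hk : (⟨n - 1, by omega⟩ : Fin n) = k := by
            refine Fin.ext ?_
            simpa using h2.symm
          rw [hk]
      rw [h01]
      exact ih (by omega)
    · rw [← roll_step T hn hT m (by omega) (by omega)]
      exact ih (by omega)

lemma roll_final (hn : 3 ≤ n) {ψ : (Fin n → Fin d) → ℂ} (hT : ∀ k, SInd ψ (T k)) :
    appAll T ψ = appAll (uOne ⟨0, by omega⟩ (Fprod T n)) ψ := by
  have he : hTup T n = uOne ⟨0, by omega⟩ (Fprod T n) := by
    funext k
    rw [hTup_apply, uOne_apply, if_neg (by omega : ¬ (k:ℕ) < n - n)]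
    by_cases h1 : (k:ℕ) = n - n
    · rw [if_pos h1, if_pos (by refine Fin.ext ?_; simpa using h1)]
    · rw [if_neg h1, if_neg (by intro hh; rw [hh] at h1; simp at h1 <;> omega)]
  rw [← roll T hn hT n (le_refl n), he]

end Roll

lemma Fprod_const (hn : 3 ≤ n) (W : Matrix (Fin d) (Fin d) ℂ) :
    ∀ m : ℕ, m ≤ n → Fprod (fun _ : Fin n => W) m = W ^ m := by
  intro m
  induction m with
  | zero => intro _; rfl
  | succ m ih =>
    intro hm
    show Tnat (fun _ : Fin n => W) (n - (m+1)) * Fprod (fun _ : Fin n => W) m = W ^ (m+1)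
    rw [ih (by omega), pow_succ']
    congr 1
    unfold Tnat
    rw [dif_pos (by omega : n - (m+1) < n)]

section Root

open scoped ComplexOrder

lemma star_aeval {d : ℕ} (M : Matrix (Fin d) (Fin d) ℂ) (p : Polynomial ℂ) :
    star (Polynomial.aeval M p) = Polynomial.aeval (star M) (p.map (starRingEnd ℂ)) := by
  induction p using Polynomial.induction_on' with
  | add p q hp hq => rw [map_add, star_add, hp, hq, Polynomial.map_add, map_add]
  | monomial a c =>
    rw [Polynomial.aeval_monomial, Polynomial.map_monomial, Polynomial.aeval_monomial]
    rw [StarMul.star_mul, star_pow]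
    rw [show ((algebraMap ℂ (Matrix (Fin d) (Fin d) ℂ)) c) = c • 1 from
      Algebra.algebraMap_eq_smul_one c]
    rw [show ((algebraMap ℂ (Matrix (Fin d) (Fin d) ℂ)) ((starRingEnd ℂ) c))
      = (starRingEnd ℂ) c • 1 from Algebra.algebraMap_eq_smul_one _]
    rw [star_smul, star_one]
    rw [smul_mul_assoc, mul_smul_comm, one_mul, mul_one]
    rfl

lemma eval_map_conj (p : Polynomial ℂ) (z : ℂ) :
    (p.map (starRingEnd ℂ)).eval z = (starRingEnd ℂ) (p.eval ((starRingEnd ℂ) z)) := by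
  induction p using Polynomial.induction_on' with
  | add p q hp hq => simp [hp, hq]
  | monomial a c =>
    simp [Polynomial.eval_monomial, _root_.map_mul, _root_.map_pow, Complex.conj_conj]

lemma exists_unitary_root {d : ℕ} (m : ℕ) (hm : 0 < m) (M : Matrix (Fin d) (Fin d) ℂ)
    (hM : M ∈ Matrix.unitaryGroup (Fin d) ℂ) :
    ∃ W : Matrix (Fin d) (Fin d) ℂ, W ∈ Matrix.unitaryGroup (Fin d) ℂ ∧
      (∃ p : Polynomial ℂ, W = Polynomial.aeval M p) ∧ W ^ m = M := by
  classical
  have hsMM : star M * M = 1 := Matrix.mem_unitaryGroup_iff'.mp hM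
  have hMsM : M * star M = 1 := Matrix.mem_unitaryGroup_iff.mp hM
  have hInt : IsIntegral ℂ M := Algebra.IsIntegral.isIntegral M
  set μ : Polynomial ℂ := minpoly ℂ M with hμdef
  have hmonic : μ.Monic := minpoly.monic hInt
  have hμne : μ ≠ 0 := hmonic.ne_zero
  have haev : Polynomial.aeval M μ = 0 := minpoly.aeval ℂ M
  -- the constant coefficient is nonzero
  have hc0 : μ.coeff 0 ≠ 0 := by
    intro h0
    obtain ⟨g, hg⟩ := Polynomial.X_dvd_iff.mpr h0
    have hgne : g ≠ 0 := by rintro rfl; rw [mul_zero] at hg; exact hμne hg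
    have haevg : M * Polynomial.aeval M g = 0 := by
      have h1 := haev
      rw [hg, _root_.map_mul, Polynomial.aeval_X] at h1
      exact h1
    have hg0 : Polynomial.aeval M g = 0 := by
      calc Polynomial.aeval M g = (star M * M) * Polynomial.aeval M g := by rw [hsMM, one_mul]
        _ = star M * (M * Polynomial.aeval M g) := by rw [mul_assoc]
        _ = 0 := by rw [haevg, mul_zero]
    have hle := minpoly.degree_le_of_ne_zero ℂ M hgne hg0
    have hlt : g.degree < μ.degree := by
      rw [hg, mul_comm]
      exact Polynomial.degree_lt_degree_mul_X hgne
    exact absurd hle (not_le.mpr hlt)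
  set c : ℂ := μ.coeff 0 with hcdef
  -- `star M` is a polynomial in `M`
  set τp : Polynomial ℂ := Polynomial.C (-c⁻¹) * μ.divX with hτdef
  have hdivX : Polynomial.aeval M μ.divX * M + c • (1 : Matrix (Fin d) (Fin d) ℂ) = 0 := by
    have h1 := congrArg (Polynomial.aeval M) (Polynomial.divX_mul_X_add μ)
    rw [haev, map_add, _root_.map_mul, Polynomial.aeval_X, Polynomial.aeval_C,
      Algebra.algebraMap_eq_smul_one] at h1
    exact h1
  have h2 : Polynomial.aeval M μ.divX * M = -(c • (1 : Matrix (Fin d) (Fin d) ℂ)) :=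
    eq_neg_of_add_eq_zero_left hdivX
  have hτM : Polynomial.aeval M τp * M = 1 := by
    rw [hτdef, _root_.map_mul, Polynomial.aeval_C, Algebra.algebraMap_eq_smul_one,
      smul_mul_assoc, one_mul, smul_mul_assoc, h2, smul_neg, neg_smul, neg_neg, smul_smul,
      inv_mul_cancel₀ hc0, one_smul]
  have hstarM : star M = Polynomial.aeval M τp := by
    calc star M = 1 * star M := (one_mul _).symm
      _ = (Polynomial.aeval M τp * M) * star M := by rw [hτM]
      _ = Polynomial.aeval M τp * (M * star M) := mul_assoc _ _ _
      _ = Polynomial.aeval M τp := by rw [hMsM, mul_one]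
  have hcomm : ∀ a b : Polynomial ℂ, Polynomial.aeval M a * Polynomial.aeval M b
      = Polynomial.aeval M b * Polynomial.aeval M a := by
    intro a b; rw [← _root_.map_mul, ← _root_.map_mul, mul_comm]
  -- splitting
  have hsplits : Polynomial.Splits μ := IsAlgClosed.splits μ
  have hprod : μ = (μ.roots.map fun a => Polynomial.X - Polynomial.C a).prod :=
    hsplits.eq_prod_roots_of_monic hmonic
  -- no repeated roots
  have hnodup : μ.roots.Nodup := by
    rw [Multiset.nodup_iff_count_le_one]
    intro a
    by_contra hcnt
    push_neg at hcnt
    have h2le : 2 ≤ μ.rootMultiplicity a := by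
      rw [← Polynomial.count_roots]; omega
    have hdvd2 : (Polynomial.X - Polynomial.C a) ^ 2 ∣ μ :=
      dvd_trans (pow_dvd_pow _ h2le) (μ.pow_rootMultiplicity_dvd a)
    obtain ⟨g, hg⟩ := hdvd2
    have hgne : g ≠ 0 := by rintro rfl; rw [mul_zero] at hg; exact hμne hg
    set q : Polynomial ℂ := (Polynomial.X - Polynomial.C a) * g with hqdef
    have hXane : (Polynomial.X - Polynomial.C a) ≠ 0 := Polynomial.X_sub_C_ne_zero a
    have hqne : q ≠ 0 := mul_ne_zero hXane hgne
    have hqdeg : q.degree < μ.degree := by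
      have hdeq : μ.degree = 1 + q.degree := by
        rw [hg, sq, mul_assoc, ← hqdef, Polynomial.degree_mul, Polynomial.degree_X_sub_C]
      rw [hdeq, Polynomial.degree_eq_natDegree hqne]
      exact_mod_cast (by exact_mod_cast Nat.lt_one_add_iff.mpr (le_refl _) :
        (q.natDegree : WithBot ℕ) < 1 + (q.natDegree : WithBot ℕ))
    have hN : Polynomial.aeval M q ≠ 0 := fun h =>
      absurd (minpoly.degree_le_of_ne_zero ℂ M hqne h) (not_le.mpr hqdeg)
    set N := Polynomial.aeval M q with hNdef
    have hNN : N * N = 0 := by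
      have hqq : q * q = μ * g := by rw [hqdef, hg]; ring
      rw [hNdef, ← _root_.map_mul, hqq, _root_.map_mul, haev, zero_mul]
    have hstarN : star N = Polynomial.aeval M ((q.map (starRingEnd ℂ)).comp τp) := by
      rw [hNdef, star_aeval, hstarM, Polynomial.aeval_comp]
    have hNcomm : N * star N = star N * N := by
      rw [hstarN, hNdef, hcomm]
    have hBB : (star N * N) * (star N * N) = 0 := by
      calc (star N * N) * (star N * N) = star N * ((N * star N) * N) := by
            rw [mul_assoc, mul_assoc]
        _ = star N * ((star N * N) * N) := by rw [hNcomm]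
        _ = (star N * star N) * (N * N) := by rw [mul_assoc, mul_assoc]
        _ = 0 := by rw [hNN, mul_zero]
    have hB0 : star N * N = 0 := by
      have hsB : star (star N * N) = star N * N := by
        rw [StarMul.star_mul, star_star]
      have : (star N * N)ᴴ * (star N * N) = 0 := by
        rw [← Matrix.star_eq_conjTranspose, hsB, hBB]
      exact Matrix.conjTranspose_mul_self_eq_zero.mp this
    have : N = 0 := by
      apply Matrix.conjTranspose_mul_self_eq_zero.mp
      rw [← Matrix.star_eq_conjTranspose, hB0]
    exact hN this
  -- roots are nonzero and of unit modulus
  have hroot_ne : ∀ a ∈ μ.roots, a ≠ 0 := by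
    intro a ha h0
    have : μ.IsRoot a := Polynomial.isRoot_of_mem_roots ha
    rw [h0] at this
    have : μ.coeff 0 = 0 := by
      rw [Polynomial.coeff_zero_eq_eval_zero]; exact this
    exact hc0 this
  have hroot_mod : ∀ a ∈ μ.roots, (starRingEnd ℂ) a * a = 1 := by
    intro a ha
    have hdvd : (Polynomial.X - Polynomial.C a) ∣ μ :=
      Polynomial.dvd_iff_isRoot.mpr (Polynomial.isRoot_of_mem_roots ha)
    obtain ⟨g, hg⟩ := hdvd
    have hgne : g ≠ 0 := by rintro rfl; rw [mul_zero] at hg; exact hμne hg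
    have hgdeg : g.degree < μ.degree := by
      have hdeq : μ.degree = 1 + g.degree := by
        rw [hg, Polynomial.degree_mul, Polynomial.degree_X_sub_C]
      rw [hdeq, Polynomial.degree_eq_natDegree hgne]
      exact_mod_cast (by exact_mod_cast Nat.lt_one_add_iff.mpr (le_refl _) :
        (g.natDegree : WithBot ℕ) < 1 + (g.natDegree : WithBot ℕ))
    have hgav : Polynomial.aeval M g ≠ 0 := fun h =>
      absurd (minpoly.degree_le_of_ne_zero ℂ M hgne h) (not_le.mpr hgdeg)
    have hfac : (M - a • 1) * Polynomial.aeval M g = 0 := by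
      have h1 := haev
      rw [hg, _root_.map_mul, map_sub, Polynomial.aeval_X, Polynomial.aeval_C,
        Algebra.algebraMap_eq_smul_one] at h1
      exact h1
    have hdet : (M - a • (1 : Matrix (Fin d) (Fin d) ℂ)).det = 0 := by
      by_contra hdet
      have hu : IsUnit (M - a • (1 : Matrix (Fin d) (Fin d) ℂ)) :=
        (Matrix.isUnit_iff_isUnit_det _).mpr (isUnit_iff_ne_zero.mpr hdet)
      obtain ⟨u, hu⟩ := hu
      have : Polynomial.aeval M g = 0 := by
        have h3 : (↑u⁻¹ : Matrix (Fin d) (Fin d) ℂ) * ((M - a • 1) * Polynomial.aeval M g)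
            = Polynomial.aeval M g := by
          rw [← mul_assoc, ← hu, Units.inv_mul, one_mul]
        rw [hfac, mul_zero] at h3
        exact h3.symm
      exact hgav this
    obtain ⟨v, hvne, hv⟩ := (Matrix.exists_mulVec_eq_zero_iff).mpr hdet
    have hMv : M.mulVec v = a • v := by
      have h5 : (M - a • (1 : Matrix (Fin d) (Fin d) ℂ)).mulVec v = M.mulVec v - a • v := by
        rw [Matrix.sub_mulVec, Matrix.smul_mulVec, Matrix.one_mulVec]
      have h4 : M.mulVec v - a • v = 0 := by rw [← h5, hv]
      rw [sub_eq_zero] at h4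
      exact h4
    have hMM1 : Mᴴ * M = 1 := by rw [← Matrix.star_eq_conjTranspose]; exact hsMM
    have hnorm : dotProduct (star (M.mulVec v)) (M.mulVec v)
        = dotProduct (star v) v := by
      rw [Matrix.star_mulVec, Matrix.dotProduct_mulVec, Matrix.vecMul_vecMul, hMM1,
        Matrix.vecMul_one]
    have hlhs : dotProduct (star (a • v)) (a • v)
        = ((starRingEnd ℂ) a * a) * dotProduct (star v) v := by
      rw [star_smul, smul_dotProduct, dotProduct_smul, smul_smul,
        smul_eq_mul, starRingEnd_apply]
    have hS : dotProduct (star v) v ≠ 0 :=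
      fun h => hvne (dotProduct_star_self_eq_zero.mp h)
    have h6 : ((starRingEnd ℂ) a * a) * dotProduct (star v) v
        = 1 * dotProduct (star v) v := by
      rw [one_mul, ← hlhs, ← hMv, hnorm]
    exact mul_right_cancel₀ hS h6
  -- build the interpolation polynomial
  set s : Finset ℂ := ⟨μ.roots, hnodup⟩ with hsdef
  have hmem_s : ∀ a : ℂ, a ∈ s ↔ a ∈ μ.roots := fun a => Iff.rfl
  have hrtex : ∀ a : ℂ, ∃ z : ℂ, z ^ m = a := fun a => IsAlgClosed.exists_pow_nat_eq a hm
  choose rt hrtspec using hrtex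
  set p : Polynomial ℂ := Lagrange.interpolate s id rt with hpdef
  have hpeval : ∀ a ∈ s, p.eval a = rt a := by
    intro a ha
    have h7 := Lagrange.eval_interpolate_at_node (v := (id : ℂ → ℂ)) (r := rt)
      (Set.injOn_id _) ha
    simpa [hpdef] using h7
  -- the key divisibility tool
  have hkey : ∀ g : Polynomial ℂ, (∀ a ∈ μ.roots, g.eval a = 0) → Polynomial.aeval M g = 0 := by
    intro g hg
    have hdvd : μ ∣ g := by
      have hfs : (∏ a ∈ s, (Polynomial.X - Polynomial.C a)) ∣ g := by
        refine Finset.prod_dvd_of_coprime ?_ ?_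
        · intro x hx y hy hxy
          exact Polynomial.isCoprime_X_sub_C_of_isUnit_sub (sub_ne_zero_of_ne hxy).isUnit
        · intro a ha
          exact Polynomial.dvd_iff_isRoot.mpr (hg a ((hmem_s a).mp ha))
      have hfs2 : μ = ∏ a ∈ s, (Polynomial.X - Polynomial.C a) := by
        rw [hprod]; rfl
      rw [hfs2]
      exact hfs
    obtain ⟨h, hh⟩ := hdvd
    rw [hh, _root_.map_mul, haev, zero_mul]
  -- the candidate root
  refine ⟨Polynomial.aeval M p, ?_, ⟨p, rfl⟩, ?_⟩
  · -- unitarity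
    have hstarW : star (Polynomial.aeval M p)
        = Polynomial.aeval M ((p.map (starRingEnd ℂ)).comp τp) := by
      rw [star_aeval, hstarM, Polynomial.aeval_comp]
    have hWsW : star (Polynomial.aeval M p) * Polynomial.aeval M p = 1 := by
      rw [hstarW, ← _root_.map_mul]
      have h8 : Polynomial.aeval M (((p.map (starRingEnd ℂ)).comp τp) * p - 1) = 0 := by
        apply hkey
        intro a ha
        have haS : a ∈ s := (hmem_s a).mpr ha
        have hane : a ≠ 0 := hroot_ne a ha
        have hmod := hroot_mod a ha
        have hconja : (starRingEnd ℂ) a = a⁻¹ :=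
          (inv_eq_of_mul_eq_one_right (by rw [mul_comm] at hmod; exact hmod)).symm
        have hτa : τp.eval a = (starRingEnd ℂ) a := by
          have h10 := congrArg (Polynomial.eval a) (Polynomial.divX_mul_X_add μ)
          rw [Polynomial.eval_add, Polynomial.eval_mul, Polynomial.eval_X,
            Polynomial.eval_C] at h10
          have hμa : μ.eval a = 0 := Polynomial.isRoot_of_mem_roots ha
          rw [hμa] at h10
          have h12 : μ.divX.eval a * a = -c := eq_neg_of_add_eq_zero_left h10
          have h13 : μ.divX.eval a = -c * a⁻¹ := by
            rw [← h12, mul_assoc, mul_inv_cancel₀ hane, mul_one]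
          rw [hτdef, Polynomial.eval_mul, Polynomial.eval_C, h13, hconja]
          field_simp
        rw [Polynomial.eval_sub, Polynomial.eval_one, Polynomial.eval_mul,
          Polynomial.eval_comp, hτa, eval_map_conj, Complex.conj_conj,
          hpeval a haS]
        have h15 : (starRingEnd ℂ) (rt a) * rt a = (Complex.normSq (rt a) : ℂ) := by
          rw [mul_comm, Complex.mul_conj]
        have h16 : ((Complex.normSq (rt a) : ℂ)) ^ m = 1 := by
          rw [← h15, mul_pow, ← map_pow, hrtspec a, hmod]
        have h17 : (Complex.normSq (rt a) : ℝ) = 1 := by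
          have h18 : ((Complex.normSq (rt a) : ℝ)) ^ m = 1 := by
            rw [← Complex.ofReal_pow] at h16
            exact_mod_cast h16
          have hnn : (0:ℝ) ≤ Complex.normSq (rt a) := Complex.normSq_nonneg _
          rcases lt_trichotomy (Complex.normSq (rt a) : ℝ) 1 with hlt | heq | hgt
          · exfalso
            have := pow_lt_one₀ hnn hlt (by omega : m ≠ 0)
            rw [h18] at this; exact lt_irrefl 1 this
          · exact heq
          · exfalso
            have := one_lt_pow₀ hgt (by omega : m ≠ 0)
            rw [h18] at this; exact lt_irrefl 1 this
        rw [h15]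
        rw [show ((Complex.normSq (rt a) : ℂ)) = ((1:ℝ) : ℂ) from by rw [h17]]
        simp
      rw [map_sub, _root_.map_one, sub_eq_zero] at h8
      exact h8
    have hWWs : Polynomial.aeval M p * star (Polynomial.aeval M p) = 1 := by
      rw [hstarW, hcomm, ← hstarW]
      exact hWsW
    exact Matrix.mem_unitaryGroup_iff.mpr hWWs
  · -- root property
    have h7 : Polynomial.aeval M (p ^ m - Polynomial.X) = 0 := by
      apply hkey
      intro a ha
      rw [Polynomial.eval_sub, Polynomial.eval_pow, Polynomial.eval_X,
        hpeval a ((hmem_s a).mpr ha), hrtspec a, sub_self]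
    rw [map_sub, _root_.map_pow, Polynomial.aeval_X, sub_eq_zero] at h7
    exact h7

end Root

lemma exists_perm_two {α : Type*} [DecidableEq α] (a b c e : α) (hab : a ≠ b) (hce : c ≠ e) :
    ∃ τ : Equiv.Perm α, τ a = c ∧ τ b = e := by
  refine ⟨(Equiv.swap a c).trans (Equiv.swap ((Equiv.swap a c) b) e), ?_, ?_⟩
  · have h1 : (Equiv.swap a c) a = c := Equiv.swap_apply_left a c
    have h2 : c ≠ (Equiv.swap a c) b := by
      intro hh
      have := (Equiv.swap a c).injective (h1.trans hh)
      exact hab this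
    simp only [Equiv.trans_apply, h1]
    exact Equiv.swap_apply_of_ne_of_ne h2 hce
  · simp only [Equiv.trans_apply]
    exact Equiv.swap_apply_left _ _

lemma Fprod_unitary (T : Fin n → Matrix (Fin d) (Fin d) ℂ)
    (hT : ∀ k, T k ∈ Matrix.unitaryGroup (Fin d) ℂ) :
    ∀ m : ℕ, Fprod T m ∈ Matrix.unitaryGroup (Fin d) ℂ := by
  intro m
  induction m with
  | zero => exact one_mem _
  | succ m ih =>
    show Tnat T (n - (m+1)) * Fprod T m ∈ _
    refine mul_mem ?_ ih
    unfold Tnat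
    split
    · exact hT _
    · exact one_mem _

lemma psym_appAll_const {ψ : (Fin n → Fin d) → ℂ} (hψ : PSym ψ)
    (X : Matrix (Fin d) (Fin d) ℂ) : PSym (appAll (fun _ => X) ψ) := by
  intro σ x
  have h1 := appAll_perm hψ (fun _ => X) σ⁻¹ x
  rw [inv_inv] at h1
  exact h1.symm

end StmtAux

theorem stmt_9 {n d : ℕ} (hn : 3 ≤ n) (ψ φ : (Fin n → Fin d) → ℂ)
    (hψ : PSym ψ) (hφ : PSym φ)
    (U : Fin n → Matrix (Fin d) (Fin d) ℂ)
    (hU : ∀ i, U i ∈ Matrix.unitaryGroup (Fin d) ℂ)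
    (h : appAll U ψ = φ) :
    ∃ V : Matrix (Fin d) (Fin d) ℂ, V ∈ Matrix.unitaryGroup (Fin d) ℂ ∧
      appAll (fun _ => V) ψ = φ := by
  classical
  open StmtAux in
  have hn0 : (0:ℕ) < n := by omega
  haveI : NeZero n := ⟨by omega⟩
  set Vt : Fin n → Matrix (Fin d) (Fin d) ℂ := fun k => star (U 0) * U k with hVdef
  have hV0 : Vt 0 = 1 := Matrix.mem_unitaryGroup_iff'.mp (hU 0)
  have hVU : ∀ k, Vt k ∈ Matrix.unitaryGroup (Fin d) ℂ :=
    fun k => mul_mem (Unitary.star_mem (hU 0)) (hU k)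
  have hφ''eq : appAll Vt ψ = appAll (fun _ => star (U 0)) φ := by
    rw [← h, appAll_appAll]
  have hPsymφ'' : PSym (appAll Vt ψ) := by
    rw [hφ''eq]; exact psym_appAll_const hφ _
  -- all permuted tuples map ψ to the same state
  have hrel : ∀ σ : Equiv.Perm (Fin n),
      appAll (fun k => Vt (σ k)) ψ = appAll Vt ψ := by
    intro σ
    funext x
    rw [appAll_perm hψ Vt σ x]
    exact hPsymφ'' σ⁻¹ x
  -- slot-independence of each Vt j
  have hsind : ∀ j, SInd ψ (Vt j) := by
    intro j
    by_cases hj : j = 0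
    · subst hj; rw [hV0]; exact sind_one ψ
    have hpair : appAll (uOne j (Vt j)) ψ = appAll (uOne 0 (Vt j)) ψ := by
      have h1 : appAll (fun k => Vt ((Equiv.swap 0 j) k)) ψ = appAll Vt ψ :=
        hrel (Equiv.swap 0 j)
      have h2 : appAll (fun k => star (Vt ((Equiv.swap 0 j) k)))
          (appAll (fun k => Vt ((Equiv.swap 0 j) k)) ψ) = ψ := by
        rw [appAll_appAll]
        have he : (fun k => star (Vt ((Equiv.swap 0 j) k)) * Vt ((Equiv.swap 0 j) k))
            = fun _ : Fin n => (1 : Matrix (Fin d) (Fin d) ℂ) := by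
          funext k; exact Matrix.mem_unitaryGroup_iff'.mp (hVU _)
        rw [he, appAll_one]
      rw [h1, appAll_appAll] at h2
      have hE : (fun k => star (Vt ((Equiv.swap 0 j) k)) * Vt k)
          = fun k => uOne (0:Fin n) (star (Vt j)) k * uOne j (Vt j) k := by
        funext k
        rw [uOne_apply, uOne_apply]
        by_cases hk0 : k = 0
        · subst hk0
          rw [if_pos rfl, if_neg (fun hh => hj hh.symm), Equiv.swap_apply_left, hV0,
            mul_one]
        · by_cases hkj : k = j
          · subst hkj
            rw [if_neg hk0, if_pos rfl, Equiv.swap_apply_right, hV0, star_one, one_mul]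
          · rw [if_neg hk0, if_neg hkj, Equiv.swap_apply_of_ne_of_ne hk0 hkj, one_mul]
            exact Matrix.mem_unitaryGroup_iff'.mp (hVU k)
      rw [hE] at h2
      have h4 : appAll (uOne 0 (Vt j))
          (appAll (fun k => uOne (0:Fin n) (star (Vt j)) k * uOne j (Vt j) k) ψ)
          = appAll (uOne 0 (Vt j)) ψ := by rw [h2]
      rw [appAll_appAll] at h4
      have h5 : (fun k => uOne (0:Fin n) (Vt j) k
          * (uOne (0:Fin n) (star (Vt j)) k * uOne j (Vt j) k)) = uOne j (Vt j) := by
        funext k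
        simp only [uOne_apply]
        by_cases hk0 : k = 0
        · subst hk0
          simp only [if_pos rfl, if_neg (fun hh : (0:Fin n) = j => hj (by rw [← hh])), mul_one]
          exact Matrix.mem_unitaryGroup_iff.mp (hVU j)
        · by_cases hkj : k = j
          · subst hkj
            simp only [if_neg hk0, if_pos rfl, one_mul]
          · simp only [if_neg hk0, if_neg hkj, one_mul, mul_one]
      rw [h5] at h4
      exact h4
    intro i i'
    by_cases hii : i = i'
    · rw [hii]
    obtain ⟨τ', hτ1, hτ2⟩ := exists_perm_two j (0:Fin n) i i' hj hii
    have htr := appAll_transport hψ hpair τ'⁻¹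
    rw [show (fun k => uOne j (Vt j) (τ'⁻¹ k)) = uOne ((τ'⁻¹)⁻¹ j) (Vt j) from
      uOne_comp_perm τ'⁻¹ j (Vt j)] at htr
    rw [show (fun k => uOne (0:Fin n) (Vt j) (τ'⁻¹ k)) = uOne ((τ'⁻¹)⁻¹ 0) (Vt j) from
      uOne_comp_perm τ'⁻¹ 0 (Vt j)] at htr
    rw [inv_inv, hτ1, hτ2] at htr
    exact htr
  -- the root
  obtain ⟨W, hWU, ⟨pp, hWp⟩, hWn⟩ := exists_unitary_root n hn0 (Fprod Vt n)
    (Fprod_unitary Vt hVU n)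
  have hsindM : SInd ψ (Fprod Vt n) := sind_Fprod Vt hn hsind n
  have hsindW : SInd ψ W := by rw [hWp]; exact sind_aeval hn hsindM pp
  have hroll1 : appAll Vt ψ = appAll (uOne ⟨0, by omega⟩ (Fprod Vt n)) ψ :=
    roll_final Vt hn hsind
  have hroll2 : appAll (fun _ : Fin n => W) ψ
      = appAll (uOne ⟨0, by omega⟩ (Fprod (fun _ : Fin n => W) n)) ψ :=
    roll_final _ hn (fun _ => hsindW)
  have hWpow : Fprod (fun _ : Fin n => W) n = W ^ n := Fprod_const hn W n (le_refl n)
  have hconst : appAll (fun _ : Fin n => W) ψ = appAll Vt ψ := by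
    rw [hroll2, hWpow, hWn, ← hroll1]
  refine ⟨U 0 * W, mul_mem (hU 0) hWU, ?_⟩
  have hsplit2 : appAll (fun _ : Fin n => U 0 * W) ψ
      = appAll (fun _ : Fin n => U 0) (appAll (fun _ : Fin n => W) ψ) :=
    (appAll_appAll _ _ _).symm
  rw [hsplit2, hconst, hφ''eq, appAll_appAll]
  have hone : (fun _ : Fin n => U 0 * star (U 0))
      = fun _ : Fin n => (1 : Matrix (Fin d) (Fin d) ℂ) :=
    funext fun _ => Matrix.mem_unitaryGroup_iff.mp (hU 0)
  rw [hone, appAll_one]
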